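/- arXiv:0809.3818 — 2 statements merged into one kernel-verified Lean document; each statement's English description precedes it below -/
import Mathlib

section
/- Let a > 0, b ≥ 0, u₀ ∈ ℝ, and let c₀ be the unique positive root of x(a x² + 2b) = 4. Let u be an axisymmetric stationary rotating profile on [0, c₀) with u(0) = u₀, i.e. u is differentiable on [0, c₀) and u'(r)/√(1 + u'(r)²) = r(a r² + 2b)/4 for all r ∈ [0, c₀). Then u(r) − u₀ < c₀ − √(c₀² − r²) for all r with 0 < r < c₀. -/
open Set

lemma phi_strictMono : StrictMono (fun t : ℝ => t / Real.sqrt (1 + t ^ 2)) := by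
  apply strictMono_of_deriv_pos
  intro t
  have hpos : (0:ℝ) < 1 + t ^ 2 := by positivity
  have hs : 0 < Real.sqrt (1 + t ^ 2) := Real.sqrt_pos.mpr hpos
  have hs2 : Real.sqrt (1 + t ^ 2) ^ 2 = 1 + t ^ 2 := Real.sq_sqrt hpos.le
  have h1 : HasDerivAt (fun t : ℝ => 1 + t ^ 2) (2 * t) t := by
    simpa using (hasDerivAt_pow 2 t).const_add (1:ℝ)
  have hsq : HasDerivAt (fun t : ℝ => Real.sqrt (1 + t ^ 2))
      (2 * t / (2 * Real.sqrt (1 + t ^ 2))) t := h1.sqrt hpos.ne'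
  have hd : HasDerivAt (fun t : ℝ => t / Real.sqrt (1 + t ^ 2))
      ((1 * Real.sqrt (1 + t ^ 2) - t * (2 * t / (2 * Real.sqrt (1 + t ^ 2)))) /
        Real.sqrt (1 + t ^ 2) ^ 2) t := (hasDerivAt_id t).div hsq hs.ne'
  rw [hd.deriv]
  have hnum : 1 * Real.sqrt (1 + t ^ 2) - t * (2 * t / (2 * Real.sqrt (1 + t ^ 2)))
      = 1 / Real.sqrt (1 + t ^ 2) := by
    field_simp
    try left
    nlinarith [hs2]
  rw [hnum]
  positivity

/-- Corollary: a profile of type I defined on the maximal interval `[0, c₀)` satisfies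
`u(r) - u₀ < c₀ - √(c₀² - r²)` for `0 < r < c₀`, where `c₀` is the unique positive
root of `x(ax² + 2b) = 4`. -/
theorem stmt_4 (a b u₀ c₀ : ℝ) (ha : 0 < a) (hb : 0 ≤ b)
    (hc₀ : 0 < c₀) (hroot : c₀ * (a * c₀ ^ 2 + 2 * b) = 4)
    (u u' : ℝ → ℝ)
    (hu : ∀ r ∈ Ico (0:ℝ) c₀, HasDerivAt u (u' r) r)
    (heq : ∀ r ∈ Ico (0:ℝ) c₀, u' r / Real.sqrt (1 + u' r ^ 2) = r * (a * r ^ 2 + 2 * b) / 4)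
    (h0 : u 0 = u₀) :
    ∀ r, 0 < r → r < c₀ → u r - u₀ < c₀ - Real.sqrt (c₀ ^ 2 - r ^ 2) := by
  intro r hr hrc
  set h : ℝ → ℝ := fun x => (c₀ - Real.sqrt (c₀ ^ 2 - x ^ 2)) - (u x - u₀) with hh
  -- key: derivative of h is positive on (0, r)
  have key : ∀ x ∈ Ioo (0:ℝ) r, ∃ d, HasDerivAt h d x ∧ 0 < d := by
    intro x hx
    have hx0 : 0 < x := hx.1
    have hxc : x < c₀ := lt_trans hx.2 hrc
    have hxI : x ∈ Ico (0:ℝ) c₀ := ⟨hx0.le, hxc⟩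
    have hpos : (0:ℝ) < c₀ ^ 2 - x ^ 2 := by nlinarith
    have hs : 0 < Real.sqrt (c₀ ^ 2 - x ^ 2) := Real.sqrt_pos.mpr hpos
    have hs2 : Real.sqrt (c₀ ^ 2 - x ^ 2) ^ 2 = c₀ ^ 2 - x ^ 2 := Real.sq_sqrt hpos.le
    set s := Real.sqrt (c₀ ^ 2 - x ^ 2)
    -- derivative of the sphere part
    have hq : HasDerivAt (fun y : ℝ => c₀ ^ 2 - y ^ 2) (-(2 * x ^ 1)) x :=
      (hasDerivAt_pow 2 x).const_sub (c₀ ^ 2)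
    have hsq : HasDerivAt (fun y : ℝ => Real.sqrt (c₀ ^ 2 - y ^ 2))
        (-(2 * x ^ 1) / (2 * s)) x := hq.sqrt hpos.ne'
    have hder : HasDerivAt h ((0 - -(2 * x ^ 1) / (2 * s)) - u' x) x :=
      ((hasDerivAt_const x c₀).sub hsq).sub ((hu x hxI).sub_const u₀)
    have hval : (0 - -(2 * x ^ 1) / (2 * s)) - u' x = x / s - u' x := by
      field_simp; ring
    rw [hval] at hder
    refine ⟨x / s - u' x, hder, ?_⟩
    -- show u' x < x / s via strict monotonicity of φ
    have hphi : u' x / Real.sqrt (1 + u' x ^ 2) < (x / s) / Real.sqrt (1 + (x / s) ^ 2) := by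
      have h1 : 1 + (x / s) ^ 2 = (c₀ / s) ^ 2 := by
        field_simp
        nlinarith [hs2]
      have h2 : Real.sqrt (1 + (x / s) ^ 2) = c₀ / s := by
        rw [h1]; exact Real.sqrt_sq (by positivity)
      rw [heq x hxI, h2]
      have h3 : (x / s) / (c₀ / s) = x / c₀ := by field_simp
      rw [h3, div_lt_div_iff₀ (by norm_num : (0:ℝ) < 4) hc₀]
      nlinarith [mul_pos hx0 (mul_pos hc₀ (mul_pos ha hpos))]
    have := phi_strictMono.lt_iff_lt.mp hphi
    linarith
  -- h is strictly monotone on [0, r]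
  have hcont : ContinuousOn h (Icc 0 r) := by
    apply ContinuousOn.sub
    · apply ContinuousOn.sub continuousOn_const
      exact (Real.continuous_sqrt.comp (by continuity)).continuousOn
    · apply ContinuousOn.sub _ continuousOn_const
      intro x hx
      exact (hu x ⟨hx.1, lt_of_le_of_lt hx.2 hrc⟩).continuousAt.continuousWithinAt
  have hmono : StrictMonoOn h (Icc 0 r) := by
    apply strictMonoOn_of_deriv_pos (convex_Icc 0 r) hcont
    intro x hx
    rw [interior_Icc] at hx
    obtain ⟨d, hd, hdpos⟩ := key x hx
    rw [hd.deriv]; exact hdpos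
  have h0r : h 0 < h r := hmono ⟨le_refl 0, hr.le⟩ ⟨hr.le, le_refl r⟩ hr
  have hzero : h 0 = 0 := by
    simp [hh, h0, Real.sqrt_sq hc₀.le]
  rw [hzero] at h0r
  simp only [hh] at h0r
  linarith
end

section
/- Let a > 0, b ≥ 0, c > 0, u₀ ∈ ℝ, and let u be an axisymmetric stationary rotating profile on [0, c] with u(0) = u₀, i.e. u is differentiable on [0, c] and u'(t)/√(1 + u'(t)²) = t(a t² + 2b)/4 for all t ∈ [0, c]. For r ∈ (0, c] let A(r) = 2π ∫₀^r t √(1 + u'(t)²) dt. Then for every r ∈ (0, c]: u(r) − u₀ ≤ ((a r² + 2b)/(8π)) · A(r) < (4 − √(16 − r²(a r² + 2b)²)) / (a r² + 2b). -/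
open Set intervalIntegral

lemma aux_solve (x y : ℝ) (h : x / Real.sqrt (1 + x ^ 2) = y) :
    y ^ 2 < 1 ∧ Real.sqrt (1 + x ^ 2) = 1 / Real.sqrt (1 - y ^ 2) ∧
      x = y / Real.sqrt (1 - y ^ 2) := by
  have h1 : (0:ℝ) < 1 + x ^ 2 := by positivity
  have hs0 : 0 < Real.sqrt (1 + x ^ 2) := Real.sqrt_pos.mpr h1
  have hs2 : Real.sqrt (1 + x ^ 2) ^ 2 = 1 + x ^ 2 := Real.sq_sqrt h1.le
  have hx : x = y * Real.sqrt (1 + x ^ 2) := by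
    field_simp at h; linarith
  have hx2 : x ^ 2 = y ^ 2 * (1 + x ^ 2) := by
    conv_lhs => rw [hx]
    rw [mul_pow, hs2]
  have key : Real.sqrt (1 + x ^ 2) ^ 2 * (1 - y ^ 2) = 1 := by
    linear_combination (1 - y ^ 2) * hs2 + hx2
  have hy2 : y ^ 2 < 1 := by nlinarith
  have hy1 : (0:ℝ) < 1 - y ^ 2 := by linarith
  have hmain : Real.sqrt (1 + x ^ 2) = 1 / Real.sqrt (1 - y ^ 2) := by
    have hsq : 1 + x ^ 2 = 1 / (1 - y ^ 2) := by
      rw [eq_div_iff hy1.ne']; linear_combination key - (1 - y ^ 2) * hs2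
    rw [hsq, one_div, Real.sqrt_inv, one_div]
  exact ⟨hy2, hmain, by rw [hx, hmain]; ring⟩

/-- Corollary (height vs. area): with `A(r) = 2π ∫₀^r t√(1+u'(t)²) dt`, for every
`r ∈ (0, c]` one has
`u(r) - u₀ ≤ ((ar²+2b)/(8π)) A(r) < (4 - √(16 - r²(ar²+2b)²))/(ar²+2b)`. -/
theorem stmt_15 (a b c u₀ : ℝ) (ha : 0 < a) (hb : 0 ≤ b) (hc : 0 < c)
    (u u' : ℝ → ℝ)
    (hu : ∀ t ∈ Icc (0:ℝ) c, HasDerivAt u (u' t) t)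
    (heq : ∀ t ∈ Icc (0:ℝ) c, u' t / Real.sqrt (1 + u' t ^ 2) = t * (a * t ^ 2 + 2 * b) / 4)
    (h0 : u 0 = u₀) :
    ∀ r, 0 < r → r ≤ c →
      u r - u₀ ≤ (a * r ^ 2 + 2 * b) / (8 * Real.pi) *
          (2 * Real.pi * ∫ t in (0:ℝ)..r, t * Real.sqrt (1 + u' t ^ 2)) ∧
        (a * r ^ 2 + 2 * b) / (8 * Real.pi) *
            (2 * Real.pi * ∫ t in (0:ℝ)..r, t * Real.sqrt (1 + u' t ^ 2)) <
          (4 - Real.sqrt (16 - r ^ 2 * (a * r ^ 2 + 2 * b) ^ 2)) / (a * r ^ 2 + 2 * b) := by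
  intro r hr hrc
  have hπ : (0:ℝ) < Real.pi := Real.pi_pos
  have hrIcc : r ∈ Icc (0:ℝ) c := ⟨hr.le, hrc⟩
  have hK : 0 < a * r ^ 2 + 2 * b := by
    have := mul_pos ha (pow_pos hr 2); linarith
  have key : ∀ t ∈ Icc (0:ℝ) c,
      (t * (a * t ^ 2 + 2 * b) / 4) ^ 2 < 1 ∧
      Real.sqrt (1 + u' t ^ 2) = 1 / Real.sqrt (1 - (t * (a * t ^ 2 + 2 * b) / 4) ^ 2) ∧
      u' t = t * (a * t ^ 2 + 2 * b) / 4 / Real.sqrt (1 - (t * (a * t ^ 2 + 2 * b) / 4) ^ 2) :=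
    fun t ht => aux_solve _ _ (heq t ht)
  have hsub : Icc (0:ℝ) r ⊆ Icc (0:ℝ) c := Icc_subset_Icc le_rfl hrc
  -- positivity of Q t = 1 - φ(t)^2 on [0,r]
  have hQpos : ∀ t ∈ Icc (0:ℝ) r, 0 < 1 - (t * (a * t ^ 2 + 2 * b) / 4) ^ 2 := by
    intro t ht
    have := (key t (hsub ht)).1
    linarith
  -- bounds on t*(a r²+2b)/4 on [0,r]
  have hφle : ∀ t ∈ Icc (0:ℝ) r, t * (a * t ^ 2 + 2 * b) / 4 ≤ t * (a * r ^ 2 + 2 * b) / 4 := by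
    intro t ht
    have ht2 : t ^ 2 ≤ r ^ 2 := by nlinarith [ht.1, ht.2]
    nlinarith [mul_nonneg ht.1 (mul_nonneg ha.le (sub_nonneg.2 ht2))]
  have hφnn : ∀ t ∈ Icc (0:ℝ) r, 0 ≤ t * (a * t ^ 2 + 2 * b) / 4 := by
    intro t ht
    have := ht.1
    have h2 : 0 ≤ a * t ^ 2 + 2 * b := by nlinarith [sq_nonneg t]
    nlinarith [mul_nonneg ht.1 h2]
  have hrφ : (r * (a * r ^ 2 + 2 * b) / 4) ^ 2 < 1 := (key r hrIcc).1
  have hWpos : ∀ t ∈ Icc (0:ℝ) r, 0 < 1 - (t * (a * r ^ 2 + 2 * b) / 4) ^ 2 := by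
    intro t ht
    have h3 : t * (a * r ^ 2 + 2 * b) ≤ r * (a * r ^ 2 + 2 * b) :=
      mul_le_mul_of_nonneg_right ht.2 hK.le
    have h4 : 0 ≤ t * (a * r ^ 2 + 2 * b) := mul_nonneg ht.1 hK.le
    nlinarith [hrφ, mul_self_le_mul_self h4 h3]
  -- continuity
  have hsqQ : ContinuousOn (fun t : ℝ => Real.sqrt (1 - (t * (a * t ^ 2 + 2 * b) / 4) ^ 2))
      (Icc (0:ℝ) r) := (Real.continuous_sqrt.comp (by fun_prop)).continuousOn
  have hsqW : ContinuousOn (fun t : ℝ => Real.sqrt (1 - (t * (a * r ^ 2 + 2 * b) / 4) ^ 2))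
      (Icc (0:ℝ) r) := (Real.continuous_sqrt.comp (by fun_prop)).continuousOn
  have hw_cont : ContinuousOn (fun t : ℝ =>
      t / Real.sqrt (1 - (t * (a * t ^ 2 + 2 * b) / 4) ^ 2)) (Icc (0:ℝ) r) :=
    ContinuousOn.div continuous_id.continuousOn hsqQ
      (fun t ht => (Real.sqrt_pos.mpr (hQpos t ht)).ne')
  have hW_cont : ContinuousOn (fun t : ℝ =>
      t / Real.sqrt (1 - (t * (a * r ^ 2 + 2 * b) / 4) ^ 2)) (Icc (0:ℝ) r) :=
    ContinuousOn.div continuous_id.continuousOn hsqW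
      (fun t ht => (Real.sqrt_pos.mpr (hWpos t ht)).ne')
  have hg_cont : ContinuousOn (fun t : ℝ =>
      t * (a * t ^ 2 + 2 * b) / 4 / Real.sqrt (1 - (t * (a * t ^ 2 + 2 * b) / 4) ^ 2))
      (Icc (0:ℝ) r) :=
    ContinuousOn.div (Continuous.continuousOn (by fun_prop)) hsqQ
      (fun t ht => (Real.sqrt_pos.mpr (hQpos t ht)).ne')
  have huIcc : uIcc (0:ℝ) r = Icc (0:ℝ) r := uIcc_of_le hr.le
  have hw_int : IntervalIntegrable (fun t : ℝ =>
      t / Real.sqrt (1 - (t * (a * t ^ 2 + 2 * b) / 4) ^ 2)) MeasureTheory.volume 0 r :=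
    (hw_cont.mono (by rw [huIcc])).intervalIntegrable
  have hW_int : IntervalIntegrable (fun t : ℝ =>
      t / Real.sqrt (1 - (t * (a * r ^ 2 + 2 * b) / 4) ^ 2)) MeasureTheory.volume 0 r :=
    (hW_cont.mono (by rw [huIcc])).intervalIntegrable
  have hg_int : IntervalIntegrable (fun t : ℝ =>
      t * (a * t ^ 2 + 2 * b) / 4 / Real.sqrt (1 - (t * (a * t ^ 2 + 2 * b) / 4) ^ 2))
      MeasureTheory.volume 0 r :=
    (hg_cont.mono (by rw [huIcc])).intervalIntegrable
  -- Step 1: FTC for u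
  have hFTC : (∫ t in (0:ℝ)..r,
      t * (a * t ^ 2 + 2 * b) / 4 / Real.sqrt (1 - (t * (a * t ^ 2 + 2 * b) / 4) ^ 2))
      = u r - u 0 := by
    refine intervalIntegral.integral_eq_sub_of_hasDerivAt (fun t ht => ?_) hg_int
    rw [huIcc] at ht
    have h2 := (key t (hsub ht)).2.2
    rw [← h2]
    exact hu t (hsub ht)
  -- Step 2: the area integrand equals w
  have harea : (∫ t in (0:ℝ)..r, t * Real.sqrt (1 + u' t ^ 2))
      = ∫ t in (0:ℝ)..r, t / Real.sqrt (1 - (t * (a * t ^ 2 + 2 * b) / 4) ^ 2) := by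
    refine intervalIntegral.integral_congr (fun t ht => ?_)
    rw [huIcc] at ht
    rw [(key t (hsub ht)).2.1]
    ring
  -- Step 3: monotone comparison ∫ g ≤ K/4 ∫ w
  have hmono : (∫ t in (0:ℝ)..r,
      t * (a * t ^ 2 + 2 * b) / 4 / Real.sqrt (1 - (t * (a * t ^ 2 + 2 * b) / 4) ^ 2))
      ≤ (a * r ^ 2 + 2 * b) / 4 *
        ∫ t in (0:ℝ)..r, t / Real.sqrt (1 - (t * (a * t ^ 2 + 2 * b) / 4) ^ 2) := by
    rw [← intervalIntegral.integral_const_mul]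
    refine intervalIntegral.integral_mono_on hr.le hg_int (hw_int.const_mul _) (fun t ht => ?_)
    have hs := Real.sqrt_pos.mpr (hQpos t ht)
    have h1 := hφle t ht
    calc t * (a * t ^ 2 + 2 * b) / 4 / Real.sqrt (1 - (t * (a * t ^ 2 + 2 * b) / 4) ^ 2)
        ≤ t * (a * r ^ 2 + 2 * b) / 4 / Real.sqrt (1 - (t * (a * t ^ 2 + 2 * b) / 4) ^ 2) := by
          exact div_le_div_of_nonneg_right h1 hs.le
      _ = (a * r ^ 2 + 2 * b) / 4 *
          (t / Real.sqrt (1 - (t * (a * t ^ 2 + 2 * b) / 4) ^ 2)) := by ring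
  -- Step 4: strict comparison ∫ w < ∫ W
  have hstrict : (∫ t in (0:ℝ)..r, t / Real.sqrt (1 - (t * (a * t ^ 2 + 2 * b) / 4) ^ 2))
      < ∫ t in (0:ℝ)..r, t / Real.sqrt (1 - (t * (a * r ^ 2 + 2 * b) / 4) ^ 2) := by
    refine intervalIntegral.integral_lt_integral_of_continuousOn_of_le_of_exists_lt hr
      hw_cont hW_cont (fun t ht => ?_) ⟨r/2, ⟨by linarith, by linarith⟩, ?_⟩
    · have ht' : t ∈ Icc (0:ℝ) r := ⟨ht.1.le, ht.2⟩
      have hsq : Real.sqrt (1 - (t * (a * r ^ 2 + 2 * b) / 4) ^ 2)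
          ≤ Real.sqrt (1 - (t * (a * t ^ 2 + 2 * b) / 4) ^ 2) := by
        apply Real.sqrt_le_sqrt
        have := mul_self_le_mul_self (hφnn t ht') (hφle t ht')
        nlinarith
      exact div_le_div_of_nonneg_left ht.1.le (Real.sqrt_pos.mpr (hWpos t ht')) hsq
    · have htmem : r/2 ∈ Icc (0:ℝ) r := ⟨by linarith, by linarith⟩
      have hlt : r/2 * (a * (r/2) ^ 2 + 2 * b) / 4 < r/2 * (a * r ^ 2 + 2 * b) / 4 := by
        have : a * (r/2) ^ 2 < a * r ^ 2 := by nlinarith [mul_pos ha (mul_pos hr hr)]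
        nlinarith [hr]
      have hsq : Real.sqrt (1 - (r/2 * (a * r ^ 2 + 2 * b) / 4) ^ 2)
          < Real.sqrt (1 - (r/2 * (a * (r/2) ^ 2 + 2 * b) / 4) ^ 2) := by
        apply Real.sqrt_lt_sqrt (hWpos (r/2) htmem).le
        have h1 := hφnn (r/2) htmem
        nlinarith
      exact div_lt_div_of_pos_left (by linarith) (Real.sqrt_pos.mpr (hWpos (r/2) htmem)) hsq
  -- Step 5: compute ∫ W by FTC
  have hFTC2 : (∫ t in (0:ℝ)..r, t / Real.sqrt (1 - (t * (a * r ^ 2 + 2 * b) / 4) ^ 2))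
      = (-(16/(a * r ^ 2 + 2 * b)^2) * Real.sqrt (1 - (r * (a * r ^ 2 + 2 * b) / 4) ^ 2))
        - (-(16/(a * r ^ 2 + 2 * b)^2) * Real.sqrt (1 - (0 * (a * r ^ 2 + 2 * b) / 4) ^ 2)) := by
    refine intervalIntegral.integral_eq_sub_of_hasDerivAt
      (f := fun t => -(16/(a * r ^ 2 + 2 * b)^2) *
        Real.sqrt (1 - (t * (a * r ^ 2 + 2 * b) / 4) ^ 2)) (fun t ht => ?_) hW_int
    rw [huIcc] at ht
    have hQ := hWpos t ht
    have hs := Real.sqrt_pos.mpr hQ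
    have h1 : HasDerivAt (fun s : ℝ => 1 - (s * (a * r ^ 2 + 2 * b) / 4) ^ 2)
        (-(t * (a * r ^ 2 + 2 * b) ^ 2 / 8)) t := by
      have h := (((hasDerivAt_id t).mul_const ((a * r ^ 2 + 2 * b) / 4)).pow 2).const_sub 1
      have e1 : (fun s : ℝ => 1 - (s * (a * r ^ 2 + 2 * b) / 4) ^ 2)
          = (fun x => 1 - ((fun y => id y * ((a * r ^ 2 + 2 * b) / 4)) ^ 2) x) := by
        funext s; simp only [Pi.pow_apply, id_eq]; ring
      rw [e1]
      exact h.congr_deriv (by simp only [id_eq]; norm_num; ring)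
    have h2 := (h1.sqrt hQ.ne').const_mul (-(16/(a * r ^ 2 + 2 * b)^2))
    refine h2.congr_deriv ?_
    symm
    rw [← mul_div_assoc]
    rw [show (-(16/(a * r ^ 2 + 2 * b)^2)) * (-(t * (a * r ^ 2 + 2 * b) ^ 2 / 8)) = 2 * t by
      field_simp; ring]
    rw [mul_div_mul_left _ _ (two_ne_zero : (2:ℝ) ≠ 0)]
  -- bridge for the sqrt
  have hbridge : Real.sqrt (16 - r ^ 2 * (a * r ^ 2 + 2 * b) ^ 2)
      = 4 * Real.sqrt (1 - (r * (a * r ^ 2 + 2 * b) / 4) ^ 2) := by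
    rw [show (16 - r ^ 2 * (a * r ^ 2 + 2 * b) ^ 2)
        = 4 ^ 2 * (1 - (r * (a * r ^ 2 + 2 * b) / 4) ^ 2) by ring,
      Real.sqrt_mul (by norm_num), Real.sqrt_sq (by norm_num)]
  -- coefficient rewrite
  have hcoef : ∀ x : ℝ, (a * r ^ 2 + 2 * b) / (8 * Real.pi) * (2 * Real.pi * x)
      = (a * r ^ 2 + 2 * b) / 4 * x := by
    intro x; field_simp; ring
  constructor
  · rw [hcoef, harea]
    rw [← h0, ← hFTC]
    exact hmono
  · rw [hcoef, harea]
    have h4 : (a * r ^ 2 + 2 * b) / 4 *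
        (∫ t in (0:ℝ)..r, t / Real.sqrt (1 - (t * (a * t ^ 2 + 2 * b) / 4) ^ 2))
        < (a * r ^ 2 + 2 * b) / 4 *
        (∫ t in (0:ℝ)..r, t / Real.sqrt (1 - (t * (a * r ^ 2 + 2 * b) / 4) ^ 2)) :=
      mul_lt_mul_of_pos_left hstrict (by linarith)
    refine h4.trans_le (le_of_eq ?_)
    rw [hFTC2]
    have h0sqrt : Real.sqrt (1 - (0 * (a * r ^ 2 + 2 * b) / 4) ^ 2) = 1 := by norm_num
    rw [h0sqrt, hbridge]
    field_simp
    ring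
end
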